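/- Let (E_i)_{i≥1} be a pairwise disjoint sequence in B, and let (m(n))_{n≥1} be a strictly increasing sequence of positive integers such that E_n ∈ B_{m(n)} for each n and such that for all n and all k > n one has (E_k)_{m(n)} = (E_{n+1})_{m(n)}. Then for every n and every k > n+1, the set E_k is (m(n), m(n+1))-thin. -/
import Mathlib


open Filter Topology

namespace Maharam

/-- The space `T = ∏_{n ≥ 1} {1, …, 2^n}`; the factor of rank `n` is encoded
as `Fin (2 ^ n)`. -/
abbrev T : Type := ∀ n : ℕ+, Fin (2 ^ (n : ℕ))

/-- `X` belongs to the algebra `B_n` generated by the coordinates of rank `≤ n`,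
i.e. `X` depends only on the coordinates of rank `≤ n`. -/
def MemBn (n : ℕ) (X : Set T) : Prop :=
  ∀ z z' : T, (∀ i : ℕ+, (i : ℕ) ≤ n → z i = z' i) → z ∈ X → z' ∈ X

/-- The algebra `B = ⋃_n B_n` of clopen subsets of `T`. -/
def MemB (X : Set T) : Prop := ∃ n : ℕ, MemBn n X

/-- The atom of rank `m` whose first `m` coordinates are prescribed by `τ`. -/
def atom (m : ℕ) (τ : ∀ i : ℕ+, Fin (2 ^ (i : ℕ))) : Set T :=
  {z | ∀ i : ℕ+, (i : ℕ) ≤ m → z i = τ i}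

/-- `A` is an atom of the algebra `B_m`. -/
def IsAtomOfRank (m : ℕ) (A : Set T) : Prop :=
  ∃ τ : ∀ i : ℕ+, Fin (2 ^ (i : ℕ)), A = atom m τ

/-- `S_{n,τ} = {z ∈ T : z_n ≠ τ}`. -/
def Sset (n : ℕ+) (τ : Fin (2 ^ (n : ℕ))) : Set T := {z | z n ≠ τ}

/-- `X` is `(m,n)`-thin: every atom of rank `m` contains an atom of rank `n`
disjoint from `X`. -/
def MNThin (m n : ℕ) (X : Set T) : Prop :=
  ∀ A : Set T, IsAtomOfRank m A →
    ∃ A' : Set T, IsAtomOfRank n A' ∧ A' ⊆ A ∧ A' ∩ X = ∅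

/-- `X` is `I`-thin: `(m,n)`-thin whenever `m < n` both belong to `I`. -/
def IThin (I : Finset ℕ+) (X : Set T) : Prop :=
  ∀ m ∈ I, ∀ n ∈ I, (m : ℕ) < (n : ℕ) → MNThin (m : ℕ) (n : ℕ) X

/-- `(X)_n`: the smallest `B_n`-measurable set containing `X` (the union of the
atoms of rank `n` meeting `X`). -/
def projSet (n : ℕ) (X : Set T) : Set T :=
  {z | ∃ z' ∈ X, ∀ i : ℕ+, (i : ℕ) ≤ n → z i = z' i}

/-- If `(E_i)` is a disjoint sequence of `B` with `E_n ∈ B_{m(n)}` for a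
strictly increasing sequence `(m(n))` of positive integers such that
`(E_k)_{m(n)} = (E_{n+1})_{m(n)}` whenever `k > n`, then for all `n` and all
`k > n+1` the set `E_k` is `(m(n), m(n+1))`-thin. -/
theorem disjoint_tail_thin (E : ℕ → Set T) (m : ℕ → ℕ)
    (hmono : StrictMono m) (hmpos : ∀ n, 0 < m n)
    (hE : ∀ n, MemBn (m n) (E n))
    (hdisj : ∀ i j, i ≠ j → E i ∩ E j = ∅)
    (hproj : ∀ n k, n < k → projSet (m n) (E k) = projSet (m n) (E (n + 1))) :
    ∀ n k, n + 1 < k → MNThin (m n) (m (n + 1)) (E k) := by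
  intro n k hk A hA
  obtain ⟨τ, rfl⟩ := hA
  have hmle : m n ≤ m (n + 1) := le_of_lt (hmono (Nat.lt_succ_self n))
  by_cases hcase : ∃ z, z ∈ atom (m n) τ ∧ z ∈ E (n + 1)
  · obtain ⟨z, hzA, hzE⟩ := hcase
    refine ⟨atom (m (n + 1)) z, ⟨z, rfl⟩, ?_, ?_⟩
    · intro y hy i hi
      exact (hy i (le_trans hi hmle)).trans (hzA i hi)
    · ext y
      simp only [Set.mem_inter_iff, Set.mem_empty_iff_false, iff_false, not_and]
      intro hyA hyE
      have hyE' : y ∈ E (n + 1) := hE (n + 1) z y (fun i hi => (hyA i hi).symm) hzE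
      have := hdisj (n + 1) k (by omega)
      exact Set.eq_empty_iff_forall_notMem.mp this y ⟨hyE', hyE⟩
  · -- A ∩ E (n+1) = ∅, then A ∩ E k = ∅
    refine ⟨atom (m (n + 1)) τ, ⟨τ, rfl⟩, ?_, ?_⟩
    · intro y hy i hi
      exact hy i (le_trans hi hmle)
    · ext y
      simp only [Set.mem_inter_iff, Set.mem_empty_iff_false, iff_false, not_and]
      intro hyA hyE
      have hyA' : y ∈ atom (m n) τ := fun i hi => hyA i (le_trans hi hmle)
      have hyproj : y ∈ projSet (m n) (E k) := ⟨y, hyE, fun _ _ => rfl⟩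
      rw [hproj n k (by omega)] at hyproj
      obtain ⟨z', hz'E, hz'⟩ := hyproj
      exact hcase ⟨z', fun i hi => (hz' i hi).symm.trans (hyA' i hi), hz'E⟩

end Maharam
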